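/- Under the stated topological assumptions, for every α > 0 and every v ∈ V the Tikhonov functional T_α(·; v) = ‖K(·) − v‖^q + αR(·) attains a minimum on U, i.e. there exists u_α ∈ U with T_α(u_α; v) ≤ T_α(u; v) for all u ∈ U. -/

import Mathlib

open Filter

/-- The Tikhonov functional `T_α(u; v) = ‖K u − v‖^q + α R(u)`, with values in `[-∞,+∞]`
(the regularizer `R` takes values in `[0,+∞]`, encoded as `EReal` with `0 ≤ R`). -/
noncomputable def Tik {U V : Type*} [NormedAddCommGroup V]
    (K : U → V) (R : U → EReal) (q α : ℝ) (v : V) (u : U) : EReal :=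
  ((‖K u - v‖ ^ q : ℝ) : EReal) + (α : EReal) * R u

/-- Under the stated topological assumptions, for every `α > 0` and every
`v ∈ V` the Tikhonov functional `T_α(·; v)` attains a minimum on `U`. -/
theorem tikhonov_minimizer_exists
    {U V : Type*} [NormedAddCommGroup U] [NormedSpace ℝ U] [CompleteSpace U]
    [NormedAddCommGroup V] [NormedSpace ℝ V] [CompleteSpace V]
    (τ : TopologicalSpace U)
    (K : U → V) (R : U → EReal) (hR0 : ∀ u, 0 ≤ R u)
    (q : ℝ) (hq : 1 ≤ q)
    (hdom : ∃ u, R u ≠ ⊤)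
    -- (1) sublevel sets of the Tikhonov functional are τ-sequentially precompact
    (hcpt : ∀ α : ℝ, 0 < α → ∀ v : V, ∀ M : EReal, ∀ u : ℕ → U,
      (∀ k, Tik K R q α v (u k) ≤ M) →
      ∃ φ : ℕ → ℕ, StrictMono φ ∧ ∃ ubar : U,
        Tendsto (u ∘ φ) atTop (@nhds U τ ubar))
    -- (2) the norm of V is sequentially lower semicontinuous
    (hnormlsc : ∀ (vk : ℕ → V) (v : V), Tendsto vk atTop (nhds v) →
      ((‖v‖ : ℝ) : EReal) ≤ Filter.liminf (fun k => ((‖vk k‖ : ℝ) : EReal)) atTop)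
    -- (3) R is τ-sequentially lower semicontinuous
    (hRlsc : ∀ (uk : ℕ → U) (u : U), Tendsto uk atTop (@nhds U τ u) →
      R u ≤ Filter.liminf (fun k => R (uk k)) atTop)
    -- (4) sublevel sets are τ-sequentially closed and K is sequentially continuous there
    (hcl : ∀ α : ℝ, 0 < α → ∀ v : V, ∀ M : EReal, ∀ (uk : ℕ → U) (u : U),
      (∀ k, Tik K R q α v (uk k) ≤ M) →
      Tendsto uk atTop (@nhds U τ u) →
      Tik K R q α v u ≤ M ∧ Tendsto (fun k => K (uk k)) atTop (nhds (K u))) :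
    ∀ α : ℝ, 0 < α → ∀ v : V, ∃ uα : U, ∀ u : U,
      Tik K R q α v uα ≤ Tik K R q α v u := by
  intro α hα v
  -- infimum of the Tikhonov functional
  set m : EReal := sInf (Set.range (Tik K R q α v)) with hm
  obtain ⟨a, ha_anti, ha_tendsto, ha_mem⟩ :=
    exists_seq_tendsto_sInf (S := Set.range (Tik K R q α v))
      ⟨Tik K R q α v hdom.choose, Set.mem_range_self _⟩ (OrderBot.bddBelow _)
  choose u hu using ha_mem
  -- all terms are bounded by a 0
  have hbd : ∀ k, Tik K R q α v (u k) ≤ a 0 := fun k => by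
    rw [hu k]; exact ha_anti (Nat.zero_le k)
  obtain ⟨φ, hφ, ubar, hconv⟩ := hcpt α hα v (a 0) u hbd
  refine ⟨ubar, fun w => ?_⟩
  have key : ∀ n : ℕ, Tik K R q α v ubar ≤ a (φ n) := by
    intro n
    have hbd' : ∀ k, Tik K R q α v ((fun k => u (φ (n + k))) k) ≤ a (φ n) := fun k => by
      rw [hu (φ (n + k))]
      exact ha_anti (hφ.le_iff_le.mpr (Nat.le_add_right n k))
    have hconv' : Tendsto (fun k => u (φ (n + k))) atTop (@nhds U τ ubar) := by
      have := hconv.comp (tendsto_add_atTop_nat n)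
      simpa [Function.comp_def, Nat.add_comm] using this
    exact (hcl α hα v (a n |> fun _ => a (φ n)) (fun k => u (φ (n + k))) ubar hbd' hconv').1
  have hm_le : Tik K R q α v ubar ≤ m := by
    have htend : Tendsto (fun n => a (φ n)) atTop (nhds m) :=
      ha_tendsto.comp hφ.tendsto_atTop
    exact ge_of_tendsto htend (Eventually.of_forall key)
  exact hm_le.trans (sInf_le (Set.mem_range_self w))
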